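/- Fix an integer t ≥ 1. The cones C_m, m ≥ 1, are pairwise disjoint: for all integers m, m' ≥ 1 with m ≠ m', we have C_m ∩ C_{m'} = ∅. -/

import Mathlib

/-- The generator `v_i ∈ ℝ^{t+1}`: coordinates `0,…,(i-1) mod t` equal `1`, the remaining
coordinates among `0,…,t-1` equal `0`, and the last coordinate equals `((i-1) div t)·t`. -/
noncomputable def geneV (t : ℕ) (i : ℕ) : Fin (t + 1) → ℝ := fun l =>
  if (l : ℕ) = t then (((i - 1) / t) * t : ℕ)
  else if (l : ℕ) ≤ (i - 1) % t then 1 else 0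

/-- The half-open simplicial cone `C_m`, generated by `v_m, …, v_{m+t}` with the facet
opposite the first generator open. -/
noncomputable def coneC (t : ℕ) (m : ℕ) : Set (Fin (t + 1) → ℝ) :=
  { x | ∃ α : Fin (t + 1) → ℝ, 0 < α 0 ∧ (∀ i, 0 ≤ α i) ∧
      x = ∑ i : Fin (t + 1), α i • geneV t (m + (i : ℕ)) }

/-- The normal vector `u_l = -((l div t)+1)·t·e₀ + t·e_{l mod t} + e_t`. -/
noncomputable def normalU (t : ℕ) (l : ℕ) : Fin (t + 1) → ℝ := fun j =>
  (if (j : ℕ) = 0 then -(((l / t + 1) * t : ℕ) : ℝ) else 0)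
    + (if (j : ℕ) = l % t then (t : ℝ) else 0)
    + (if (j : ℕ) = t then 1 else 0)

/-- Standard inner product on `ℝ^{t+1}`. -/
noncomputable def sprod {n : ℕ} (u x : Fin n → ℝ) : ℝ := ∑ j, u j * x j

lemma sum_if_mul {n : ℕ} (c : ℕ) (hc : c < n) (s : ℝ) (x : Fin n → ℝ) :
    ∑ j : Fin n, (if (j:ℕ) = c then s else 0) * x j = s * x ⟨c, hc⟩ := by
  rw [Finset.sum_eq_single (⟨c, hc⟩ : Fin n)]
  · simp
  · intro b _ hb
    rw [if_neg (fun h => hb (Fin.ext h)), zero_mul]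
  · simp

lemma sprod_sum {n N : ℕ} (u : Fin n → ℝ) (α : Fin N → ℝ) (w : Fin N → Fin n → ℝ) :
    sprod u (∑ i, α i • w i) = ∑ i, α i * sprod u (w i) := by
  simp only [sprod, Finset.sum_apply, Pi.smul_apply, smul_eq_mul, Finset.mul_sum]
  rw [Finset.sum_comm]
  exact Finset.sum_congr rfl fun i _ => Finset.sum_congr rfl fun j _ => by ring

lemma sprod_eval (t l i : ℕ) (ht : 1 ≤ t) :
    sprod (normalU t l) (geneV t i)
      = ((((i-1)/t*t : ℕ) : ℝ) + (if l % t ≤ (i-1) % t then (t:ℝ) else 0))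
        - ((l/t+1)*t : ℕ) := by
  have hmod : l % t < t := Nat.mod_lt _ ht
  have e0 : (0:ℕ) < t + 1 := by omega
  have e1 : l % t < t + 1 := by omega
  have e2 : t < t + 1 := by omega
  unfold sprod normalU
  simp only [add_mul]
  rw [Finset.sum_add_distrib, Finset.sum_add_distrib,
    sum_if_mul 0 e0, sum_if_mul (l % t) e1, sum_if_mul t e2]
  have g0 : geneV t i ⟨0, e0⟩ = 1 := by
    unfold geneV; simp only
    rw [if_neg (by omega), if_pos (by omega)]
  have g1 : geneV t i ⟨l % t, e1⟩ = if l % t ≤ (i-1) % t then 1 else 0 := by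
    unfold geneV; simp only
    rw [if_neg (by omega)]
  have g2 : geneV t i ⟨t, e2⟩ = (((i - 1) / t) * t : ℕ) := by
    unfold geneV; simp only
    simp
  rw [g0, g1, g2]
  split_ifs <;> ring

lemma step_mul (t q a : ℕ) (h : q < a) : q * t + t ≤ a * t := by
  calc q * t + t = (q + 1) * t := by ring
    _ ≤ a * t := Nat.mul_le_mul_right _ h

lemma nat_nonneg (t a b q r : ℕ) (hb : b < t) (hr : r < t)
    (h1 : a*t + b ≤ q*t + r) : a*t + t ≤ q*t + (if b ≤ r then t else 0) := by
  split_ifs with hbr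
  · have : a ≤ q := by
      by_contra h
      have := step_mul t q a (by omega)
      linarith
    have := Nat.mul_le_mul_right t this
    linarith
  · have : a + 1 ≤ q := by
      by_contra h
      have : q ≤ a := by omega
      have := Nat.mul_le_mul_right t this
      omega
    have := step_mul t a q (by omega)
    linarith

lemma nat_zero (t a b q r : ℕ) (hb : b < t) (hr : r < t)
    (h1 : a*t + b ≤ q*t + r) (h2 : q*t + r < a*t + b + t) :
    q*t + (if b ≤ r then t else 0) = a*t + t := by
  split_ifs with hbr
  · have hq : q = a := by
      rcases Nat.lt_trichotomy q a with h|h|h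
      · have := step_mul t q a h; omega
      · exact h
      · have := step_mul t a q h; omega
    rw [hq]
  · have hq : q = a + 1 := by
      rcases Nat.lt_trichotomy q (a+1) with h|h|h
      · have : q ≤ a := by omega
        have := Nat.mul_le_mul_right t this
        omega
      · exact h
      · have := step_mul t (a+1) q h
        have : a*t + t + t ≤ q * t := by linarith [add_mul a 1 t]
        omega
    rw [hq]; ring

lemma nat_self (t a b q r : ℕ) (ht : 1 ≤ t) (hb : b < t) (hr : r < t)
    (h : q*t + r + 1 = a*t + b) : q*t + (if b ≤ r then t else 0) = a*t := by
  rcases Nat.eq_zero_or_pos b with hb0|hb0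
  · subst hb0
    rw [if_pos (by omega)]
    have hlt : q < a := by
      have : q * t < a * t := by omega
      exact Nat.lt_of_mul_lt_mul_right this
    have := step_mul t q a hlt
    omega
  · have hq : q = a := by
      rcases Nat.lt_trichotomy q a with h'|h'|h'
      · have := step_mul t q a h'; omega
      · exact h'
      · have := step_mul t a q h'; omega
    subst hq
    rw [if_neg (by omega)]
    omega

lemma sprod_nonneg (t l i : ℕ) (ht : 1 ≤ t) (h : l + 1 ≤ i) :
    0 ≤ sprod (normalU t l) (geneV t i) := by
  rw [sprod_eval t l i ht]
  have hb : l % t < t := Nat.mod_lt _ ht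
  have hr : (i-1) % t < t := Nat.mod_lt _ ht
  have hd1 := Nat.div_add_mod' l t
  have hd2 := Nat.div_add_mod' (i-1) t
  have h1 : (l/t)*t + l%t ≤ ((i-1)/t)*t + (i-1)%t := by
    omega
  have key := nat_nonneg t (l/t) (l%t) ((i-1)/t) ((i-1)%t) hb hr h1
  have hlt : ((l/t+1)*t : ℕ) = (l/t)*t + t := by ring
  split_ifs at key ⊢ with hc
  · have := (Nat.cast_le (α := ℝ)).2 key
    push_cast at this ⊢
    linarith
  · have := (Nat.cast_le (α := ℝ)).2 key
    push_cast at this ⊢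
    linarith

lemma sprod_zero (t l i : ℕ) (ht : 1 ≤ t) (h1 : l + 1 ≤ i) (h2 : i ≤ l + t) :
    sprod (normalU t l) (geneV t i) = 0 := by
  rw [sprod_eval t l i ht]
  have hb : l % t < t := Nat.mod_lt _ ht
  have hr : (i-1) % t < t := Nat.mod_lt _ ht
  have hd1 := Nat.div_add_mod' l t
  have hd2 := Nat.div_add_mod' (i-1) t
  have ha : (l/t)*t + l%t ≤ ((i-1)/t)*t + (i-1)%t := by
    omega
  have hb2 : ((i-1)/t)*t + (i-1)%t < (l/t)*t + l%t + t := by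
    omega
  have key := nat_zero t (l/t) (l%t) ((i-1)/t) ((i-1)%t) hb hr ha hb2
  split_ifs at key ⊢ with hc
  · have := congrArg (Nat.cast : ℕ → ℝ) key
    push_cast at this ⊢
    linarith
  · have := congrArg (Nat.cast : ℕ → ℝ) key
    push_cast at this ⊢
    linarith

lemma sprod_self (t m : ℕ) (ht : 1 ≤ t) (hm : 1 ≤ m) :
    sprod (normalU t m) (geneV t m) = -t := by
  rw [sprod_eval t m m ht]
  have hb : m % t < t := Nat.mod_lt _ ht
  have hr : (m-1) % t < t := Nat.mod_lt _ ht
  have hd1 := Nat.div_add_mod' m t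
  have hd2 := Nat.div_add_mod' (m-1) t
  have h : ((m-1)/t)*t + (m-1)%t + 1 = (m/t)*t + m%t := by
    omega
  have key := nat_self t (m/t) (m%t) ((m-1)/t) ((m-1)%t) ht hb hr h
  split_ifs at key ⊢ with hc
  · have := congrArg (Nat.cast : ℕ → ℝ) key
    push_cast at this ⊢
    linarith
  · have := congrArg (Nat.cast : ℕ → ℝ) key
    push_cast at this ⊢
    linarith

lemma cone_disj_aux (t m m' : ℕ) (ht : 1 ≤ t) (hm : 1 ≤ m) (hlt : m < m')
    (x : Fin (t + 1) → ℝ) (h1 : x ∈ coneC t m) (h2 : x ∈ coneC t m') : False := by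
  obtain ⟨α, hα0, hαn, hx⟩ := h1
  obtain ⟨β, hβ0, hβn, hx'⟩ := h2
  have hneg : sprod (normalU t m) x < 0 := by
    rw [hx, sprod_sum, Fin.sum_univ_succ]
    have h0 : sprod (normalU t m) (geneV t (m + ((0 : Fin (t+1)) : ℕ))) = -t := by
      simpa using sprod_self t m ht hm
    rw [h0]
    have hrest : ∑ i : Fin t, α i.succ * sprod (normalU t m) (geneV t (m + (i.succ : ℕ))) = 0 := by
      apply Finset.sum_eq_zero
      intro i _
      rw [sprod_zero t m (m + (i.succ : ℕ)) ht (by simp [Fin.val_succ])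
        (by have := i.isLt; simp [Fin.val_succ]), mul_zero]
    rw [hrest, add_zero]
    have : (0:ℝ) < t := by exact_mod_cast ht
    nlinarith
  have hpos : 0 ≤ sprod (normalU t m) x := by
    rw [hx', sprod_sum]
    apply Finset.sum_nonneg
    intro i _
    exact mul_nonneg (hβn i) (sprod_nonneg t m (m' + (i : ℕ)) ht (by omega))
  linarith

/-- The cones `C_m`, `m ≥ 1`, are pairwise disjoint. -/
theorem cones_pairwise_disjoint (t : ℕ) (ht : 1 ≤ t) (m m' : ℕ)
    (hm : 1 ≤ m) (hm' : 1 ≤ m') (hne : m ≠ m') :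
    coneC t m ∩ coneC t m' = ∅ := by
  rw [Set.eq_empty_iff_forall_notMem]
  rintro x ⟨h1, h2⟩
  rcases Nat.lt_or_ge m m' with h | h
  · exact cone_disj_aux t m m' ht hm h x h1 h2
  · exact cone_disj_aux t m' m ht hm' (by omega) x h2 h1
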